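/- If f(z) = Σ_{k=0}^∞ a_k z^k is holomorphic on the unit disk with |f(z)| ≤ 1 for all |z| < 1, then Σ_{k=0}^∞ |a_k| r^k ≤ 1 for all 0 ≤ r ≤ 1/3. -/

import Mathlib

open Metric Complex

/-- Summability of norms at smaller radius. -/
lemma bohr_summable_aux {c : ℕ → ℂ}
    (h : ∀ w : ℂ, ‖w‖ < 1 → Summable (fun m : ℕ => c m * w ^ m))
    {r : ℝ} (hr0 : 0 ≤ r) (hr : r < 1) :
    Summable (fun m : ℕ => ‖c m‖ * r ^ m) := by
  obtain ⟨ρ, hrρ, hρ1⟩ : ∃ ρ : ℝ, r < ρ ∧ ρ < 1 := ⟨(1 + r) / 2, by constructor <;> linarith⟩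
  have hρ0 : 0 < ρ := lt_of_le_of_lt hr0 hrρ
  have hsum := h (ρ : ℂ) (by simpa [Complex.norm_real, abs_of_pos hρ0] using hρ1)
  have htend : Filter.Tendsto (fun m : ℕ => c m * (ρ : ℂ) ^ m) Filter.atTop (nhds 0) :=
    hsum.tendsto_atTop_zero
  obtain ⟨C, hC⟩ := Asymptotics.isBigO_one_nat_atTop_iff.mp (htend.isBigO_one ℝ)
  have hratio1 : r / ρ < 1 := (div_lt_one hρ0).mpr hrρ
  refine Summable.of_nonneg_of_le (fun m => by positivity) (fun m => ?_)
    ((summable_geometric_of_lt_one (by positivity) hratio1).mul_left C)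
  have hCm : ‖c m‖ * ρ ^ m ≤ C := by
    have := hC m
    rwa [norm_mul, norm_pow, Complex.norm_real, Real.norm_eq_abs, abs_of_pos hρ0] at this
  calc ‖c m‖ * r ^ m = ‖c m‖ * ρ ^ m * (r / ρ) ^ m := by
        rw [mul_assoc, ← mul_pow, mul_div_cancel₀ _ (ne_of_gt hρ0)]
    _ ≤ C * (r / ρ) ^ m := by
        apply mul_le_mul_of_nonneg_right hCm (by positivity)
lemma bohr_key {g : ℂ → ℂ} {c : ℕ → ℂ}
    (hs : ∀ w : ℂ, ‖w‖ < 1 → HasSum (fun m : ℕ => c m * w ^ m) (g w))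
    (hbd : ∀ w : ℂ, ‖w‖ < 1 → ‖g w‖ ≤ 1) :
    ‖c 1‖ ≤ 1 - ‖c 0‖ ^ 2 := by
  -- power series
  set p := FormalMultilinearSeries.ofScalars ℂ c with hp
  have hball : eball (0:ℂ) 1 = ball (0:ℂ) 1 := by
    ext y
    simp [Metric.mem_eball, ← ENNReal.coe_one, ENNReal.coe_lt_coe,
      ← NNReal.coe_lt_coe, mem_ball, dist_zero_right, ← NNReal.coe_lt_coe]
  have hradius : 1 ≤ p.radius := by
    refine ENNReal.le_of_forall_nnreal_lt (fun t ht => ?_)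
    have ht1 : (t : ℝ) < 1 := by exact_mod_cast ht
    apply p.le_radius_of_summable_norm
    have := bohr_summable_aux (fun w hw => (hs w hw).summable) t.coe_nonneg ht1
    simpa only [hp, FormalMultilinearSeries.ofScalars_norm] using this
  have hps : HasFPowerSeriesOnBall g p 0 1 := by
    refine ⟨hradius, one_pos, fun {y} hy => ?_⟩
    rw [hball, mem_ball, dist_zero_right] at hy
    have := hs y hy
    simp only [hp, FormalMultilinearSeries.ofScalars_apply_eq, smul_eq_mul, zero_add]
    exact this
  have hg0 : g 0 = c 0 := by
    have h0 := hs 0 (by simp)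
    have h1 : HasSum (fun m : ℕ => c m * (0:ℂ) ^ m) (c 0) := by
      convert hasSum_single (f := fun m : ℕ => c m * (0:ℂ) ^ m) 0
        (fun m hm => by simp [zero_pow hm]) using 1
      simp
    exact h0.unique h1
  have hderiv : deriv g 0 = c 1 := by
    rw [hps.hasFPowerSeriesAt.deriv]
    have : (FormalMultilinearSeries.ofScalars ℂ c 1) (fun _ => 1) = c 1 := by
      rw [FormalMultilinearSeries.ofScalars_apply_eq]; simp
    simpa [hp] using this
  have hdiff : DifferentiableOn ℂ g (ball (0:ℂ) 1) := by
    have := hps.differentiableOn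
    rwa [hball] at this
  have h0mem : (0:ℂ) ∈ ball (0:ℂ) 1 := by simp
  -- case: maximum modulus attained
  by_cases hmax : ∃ w ∈ ball (0:ℂ) 1, 1 ≤ ‖g w‖
  · obtain ⟨w, hw, hw1⟩ := hmax
    have hmaxon : IsMaxOn (norm ∘ g) (ball (0:ℂ) 1) w := by
      intro x hx
      show ‖g x‖ ≤ ‖g w‖
      exact (hbd x (by simpa using hx)).trans hw1
    have heq : Set.EqOn g (Function.const ℂ (g w)) (ball (0:ℂ) 1) :=
      Complex.eqOn_of_isPreconnected_of_isMaxOn_norm (convex_ball _ _).isPreconnected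
        isOpen_ball hdiff hw hmaxon
    have hev : g =ᶠ[nhds 0] Function.const ℂ (g w) :=
      Filter.eventuallyEq_of_mem (isOpen_ball.mem_nhds h0mem) heq
    have hd0 : deriv g 0 = 0 := by rw [hev.deriv_eq]; exact deriv_const _ _
    have hc1 : c 1 = 0 := by rw [← hderiv, hd0]
    have hc0 : ‖c 0‖ = 1 := by
      rw [← hg0, heq h0mem]
      exact le_antisymm (hbd w (by simpa using hw)) hw1
    rw [hc1, hc0]; norm_num
  · push_neg at hmax
    set u := c 0 with hu
    have hu1 : ‖u‖ < 1 := by rw [← hg0]; exact hmax 0 h0mem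
    set h : ℂ → ℂ := fun w => (g w - u) / (1 - (starRingEnd ℂ) u * g w) with hh
    have hden : ∀ w ∈ ball (0:ℂ) 1, 1 - (starRingEnd ℂ) u * g w ≠ 0 := by
      intro w hw heq0
      have h1 : ‖(starRingEnd ℂ) u * g w‖ < 1 := by
        rw [norm_mul, RCLike.norm_conj]
        calc ‖u‖ * ‖g w‖ ≤ ‖u‖ * 1 := by
              apply mul_le_mul_of_nonneg_left (hbd w (by simpa using hw)) (norm_nonneg _)
          _ < 1 := by simpa using hu1
      have : (starRingEnd ℂ) u * g w = 1 := by linear_combination -heq0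
      rw [this] at h1; simp at h1
    -- key modulus identity
    have hid : ∀ U V : ℂ, ‖1 - (starRingEnd ℂ) U * V‖ ^ 2 - ‖V - U‖ ^ 2
        = (1 - ‖U‖ ^ 2) * (1 - ‖V‖ ^ 2) := by
      intro U V
      simp only [← Complex.normSq_eq_norm_sq, Complex.normSq_apply,
        Complex.sub_re, Complex.sub_im, Complex.mul_re, Complex.mul_im, Complex.one_re,
        Complex.one_im, Complex.conj_re, Complex.conj_im]
      ring
    have hmaps : Set.MapsTo h (ball (0:ℂ) 1) (ball (h 0) 1) := by
      intro w hw
      have hgw : ‖g w‖ < 1 := hmax w hw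
      have hd := hden w hw
      have hpos : 0 < ‖1 - (starRingEnd ℂ) u * g w‖ := norm_pos_iff.mpr hd
      have hlt : ‖g w - u‖ < ‖1 - (starRingEnd ℂ) u * g w‖ := by
        have hEq := hid u (g w)
        have hprod : 0 < (1 - ‖u‖ ^ 2) * (1 - ‖g w‖ ^ 2) :=
          mul_pos (by nlinarith [norm_nonneg u]) (by nlinarith [norm_nonneg (g w)])
        nlinarith [norm_nonneg (g w - u), norm_nonneg (1 - (starRingEnd ℂ) u * g w)]
      have hval : ‖h w‖ < 1 := by
        rw [hh]; simp only [norm_div]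
        rw [div_lt_one hpos]; exact hlt
      have hh0 : h 0 = 0 := by
        rw [hh]; simp [hg0, hu]
      rw [mem_ball, hh0, dist_zero_right]
      exact hval
    have hdiffh : DifferentiableOn ℂ h (ball (0:ℂ) 1) := by
      apply DifferentiableOn.div
      · exact hdiff.sub_const u
      · exact (differentiableOn_const _).sub ((hdiff.const_smul ((starRingEnd ℂ) u)).congr
          (fun x _ => by simp [smul_eq_mul]))
      · exact hden
    have hschwarz : ‖deriv h 0‖ ≤ 1 := by
      have := Complex.norm_deriv_le_div_of_mapsTo_ball hdiffh (hmaps.mono_right ball_subset_closedBall) one_pos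
      simpa using this
    -- compute deriv h 0
    have hgd : HasDerivAt g (c 1) 0 := by
      have : DifferentiableAt ℂ g 0 := (hdiff.differentiableAt (isOpen_ball.mem_nhds h0mem))
      simpa [hderiv] using this.hasDerivAt
    have hnum : HasDerivAt (fun w => g w - u) (c 1) 0 := hgd.sub_const u
    have hden' : HasDerivAt (fun w => 1 - (starRingEnd ℂ) u * g w)
        (-((starRingEnd ℂ) u * c 1)) 0 := by
      simpa using (hgd.const_mul ((starRingEnd ℂ) u)).const_sub (1:ℂ)
    have hd0 : (1 : ℂ) - (starRingEnd ℂ) u * g 0 ≠ 0 := hden 0 h0mem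
    have hhd : HasDerivAt h
        ((c 1 * (1 - (starRingEnd ℂ) u * g 0) - (g 0 - u) * -((starRingEnd ℂ) u * c 1))
          / (1 - (starRingEnd ℂ) u * g 0) ^ 2) 0 := hnum.div hden' hd0
    have hg0u : g 0 = u := by rw [hg0]
    have hconj : (starRingEnd ℂ) u * u = (‖u‖ ^ 2 : ℝ) := by
      rw [mul_comm, Complex.mul_conj]
      norm_cast
      rw [← Complex.sq_norm]
    have hval : deriv h 0 = c 1 / (1 - (‖u‖ ^ 2 : ℝ)) := by
      rw [hhd.deriv, hg0u, hconj]
      have hne : (1 : ℂ) - (‖u‖ ^ 2 : ℝ) ≠ 0 := by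
        intro hE
        have hre := congrArg Complex.re hE
        simp only [Complex.sub_re, Complex.one_re, Complex.ofReal_re, Complex.zero_re] at hre
        nlinarith [norm_nonneg u]
      rw [sub_self, zero_mul, sub_zero, div_eq_div_iff (pow_ne_zero 2 hne) hne]; ring
    rw [hval] at hschwarz
    have hpos2 : (0:ℝ) < 1 - ‖u‖ ^ 2 := by nlinarith [norm_nonneg u]
    rw [norm_div] at hschwarz
    have hnd : ‖(1 : ℂ) - (‖u‖ ^ 2 : ℝ)‖ = 1 - ‖u‖ ^ 2 := by
      rw [show (1:ℂ) - (‖u‖^2 : ℝ) = ((1 - ‖u‖^2 : ℝ) : ℂ) by push_cast; ring,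
        Complex.norm_real, Real.norm_eq_abs, abs_of_pos hpos2]
    rw [hnd, div_le_one hpos2] at hschwarz
    exact hschwarz
lemma bohr_wiener {f : ℂ → ℂ} {a : ℕ → ℂ}
    (hf : ∀ z : ℂ, ‖z‖ < 1 → HasSum (fun k : ℕ => a k * z ^ k) (f z))
    (hb : ∀ z : ℂ, ‖z‖ < 1 → ‖f z‖ ≤ 1) {n : ℕ} (hn : 1 ≤ n) :
    ‖a n‖ ≤ 1 - ‖a 0‖ ^ 2 := by
  have hnne : n ≠ 0 := by omega
  have hnC : (n : ℂ) ≠ 0 := by exact_mod_cast hnne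
  set ζ : ℂ := Complex.exp (2 * Real.pi * Complex.I / n) with hζdef
  have hζ : IsPrimitiveRoot ζ n := Complex.isPrimitiveRoot_exp n hnne
  have hζ1 : ‖ζ‖ = 1 := by
    have hpow : ‖ζ‖ ^ n = 1 := by rw [← norm_pow, hζ.pow_eq_one, norm_one]
    rcases lt_trichotomy ‖ζ‖ 1 with h | h | h
    · exact absurd hpow (by nlinarith [pow_lt_one₀ (norm_nonneg ζ) h hnne])
    · exact h
    · exact absurd hpow (by nlinarith [one_lt_pow₀ h hnne])
  have hpowcomm : ∀ (j k : ℕ), (ζ ^ j) ^ k = (ζ ^ k) ^ j := fun j k => by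
    rw [← pow_mul, ← pow_mul, mul_comm]
  have hgeom : ∀ k : ℕ, (∑ j ∈ Finset.range n, (ζ ^ j) ^ k)
      = if n ∣ k then (n : ℂ) else 0 := by
    intro k
    by_cases hd : n ∣ k
    · rw [if_pos hd]
      have h1 : ζ ^ k = 1 := (hζ.pow_eq_one_iff_dvd k).mpr hd
      simp [hpowcomm, h1]
    · rw [if_neg hd]
      have h1 : ζ ^ k ≠ 1 := fun hE => hd ((hζ.pow_eq_one_iff_dvd k).mp hE)
      calc (∑ j ∈ Finset.range n, (ζ ^ j) ^ k) = ∑ j ∈ Finset.range n, (ζ ^ k) ^ j := by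
            simp [hpowcomm]
        _ = ((ζ ^ k) ^ n - 1) / (ζ ^ k - 1) := geom_sum_eq h1 n
        _ = 0 := by
            rw [hpowcomm k n, hζ.pow_eq_one, one_pow, sub_self, zero_div]
  set G : ℂ → ℂ := fun w => ∑' m : ℕ, a (n * m) * w ^ m with hGdef
  have hG : ∀ w : ℂ, ‖w‖ < 1 →
      HasSum (fun m : ℕ => a (n * m) * w ^ m) (G w) ∧ ‖G w‖ ≤ 1 := by
    intro w hw
    obtain ⟨z, hz⟩ := IsAlgClosed.exists_pow_nat_eq w (show 0 < n by omega)
    have hz1 : ‖z‖ < 1 := by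
      by_contra hc
      push_neg at hc
      have : (1:ℝ) ≤ ‖z‖ ^ n := one_le_pow₀ hc
      rw [← norm_pow, hz] at this
      linarith
    have hjz : ∀ j : ℕ, ‖ζ ^ j * z‖ < 1 := fun j => by
      rw [norm_mul, norm_pow, hζ1, one_pow, one_mul]; exact hz1
    have hsum1 : HasSum (fun k : ℕ => ∑ j ∈ Finset.range n, a k * (ζ ^ j * z) ^ k)
        (∑ j ∈ Finset.range n, f (ζ ^ j * z)) :=
      hasSum_sum fun j _ => hf _ (hjz j)
    set S : ℂ := (n : ℂ)⁻¹ * ∑ j ∈ Finset.range n, f (ζ ^ j * z) with hSdef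
    have hsum2 : HasSum (fun k : ℕ =>
        (n : ℂ)⁻¹ * ∑ j ∈ Finset.range n, a k * (ζ ^ j * z) ^ k) S := hsum1.mul_left _
    have hterm : (fun k : ℕ => (n : ℂ)⁻¹ * ∑ j ∈ Finset.range n, a k * (ζ ^ j * z) ^ k)
        = fun k : ℕ => if n ∣ k then a k * z ^ k else 0 := by
      funext k
      have hfac : ∑ j ∈ Finset.range n, a k * (ζ ^ j * z) ^ k
          = (∑ j ∈ Finset.range n, (ζ ^ j) ^ k) * (a k * z ^ k) := by
        rw [Finset.sum_mul]
        exact Finset.sum_congr rfl fun j _ => by rw [mul_pow]; ring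
      rw [hfac, hgeom k]
      split_ifs with hd
      · rw [← mul_assoc, inv_mul_cancel₀ hnC, one_mul]
      · rw [zero_mul, mul_zero]
    rw [hterm] at hsum2
    have hinj : Function.Injective (fun m : ℕ => n * m) := fun m1 m2 h =>
      Nat.eq_of_mul_eq_mul_left (by omega) h
    have hside : ∀ k ∉ Set.range (fun m : ℕ => n * m),
        (if n ∣ k then a k * z ^ k else 0) = 0 := by
      intro k hk
      rw [if_neg]
      rintro ⟨m, rfl⟩
      exact hk ⟨m, rfl⟩
    have hsum4 : HasSum (fun m : ℕ => a (n * m) * w ^ m) S := by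
      have h5 := (Function.Injective.hasSum_iff hinj hside).mpr hsum2
      have h6 : (fun m : ℕ => (if n ∣ n * m then a (n * m) * z ^ (n * m) else 0))
          = fun m : ℕ => a (n * m) * w ^ m := by
        funext m
        rw [if_pos ⟨m, rfl⟩, ← hz, ← pow_mul]
      rwa [← h6]
    have hGw : G w = S := hsum4.tsum_eq
    refine ⟨hGw ▸ hsum4, ?_⟩
    rw [hGw, hSdef, norm_mul]
    have hbd : ‖∑ j ∈ Finset.range n, f (ζ ^ j * z)‖ ≤ (n : ℝ) := by
      calc ‖∑ j ∈ Finset.range n, f (ζ ^ j * z)‖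
          ≤ ∑ j ∈ Finset.range n, ‖f (ζ ^ j * z)‖ := norm_sum_le _ _
        _ ≤ ∑ _j ∈ Finset.range n, (1:ℝ) := Finset.sum_le_sum fun j _ => hb _ (hjz j)
        _ = (n : ℝ) := by simp
    have hninv : ‖((n : ℂ))⁻¹‖ = (n : ℝ)⁻¹ := by
      rw [norm_inv]; norm_cast
    rw [hninv]
    calc ((n:ℝ))⁻¹ * ‖∑ j ∈ Finset.range n, f (ζ ^ j * z)‖
        ≤ ((n:ℝ))⁻¹ * (n : ℝ) := by
          apply mul_le_mul_of_nonneg_left hbd (by positivity)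
      _ = 1 := inv_mul_cancel₀ (by exact_mod_cast hnne)
  have hkey := bohr_key (g := G) (c := fun m : ℕ => a (n * m))
    (fun w hw => (hG w hw).1) (fun w hw => (hG w hw).2)
  simpa using hkey
set_option maxHeartbeats 1000000 in
/-- Classical Bohr inequality. -/
theorem bohr_inequality (f : ℂ → ℂ) (a : ℕ → ℂ)
    (hf : ∀ z : ℂ, ‖z‖ < 1 → HasSum (fun k : ℕ => a k * z ^ k) (f z))
    (hb : ∀ z : ℂ, ‖z‖ < 1 → ‖f z‖ ≤ 1)
    (r : ℝ) (hr0 : 0 ≤ r) (hr : r ≤ 1 / 3) :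
    ∑' k : ℕ, ‖a k‖ * r ^ k ≤ 1 := by
  have hr1 : r < 1 := by linarith
  set A : ℝ := ‖a 0‖ with hA
  have hA0 : 0 ≤ A := norm_nonneg _
  have hA1 : A ≤ 1 := by
    have h0 := hf 0 (by simp)
    have h1 : HasSum (fun m : ℕ => a m * (0:ℂ) ^ m) (a 0) := by
      convert hasSum_single (f := fun m : ℕ => a m * (0:ℂ) ^ m) 0
        (fun m hm => by simp [zero_pow hm]) using 1
      simp
    have : f 0 = a 0 := h0.unique h1
    rw [hA, ← this]
    exact hb 0 (by simp)
  have hwiener : ∀ k : ℕ, 1 ≤ k → ‖a k‖ ≤ 1 - A ^ 2 := fun k hk =>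
    bohr_wiener hf hb hk
  have hsum : Summable (fun k : ℕ => ‖a k‖ * r ^ k) :=
    bohr_summable_aux (fun w hw => (hf w hw).summable) hr0 hr1
  rw [hsum.tsum_eq_zero_add]
  have htail : ∑' k : ℕ, ‖a (k + 1)‖ * r ^ (k + 1) ≤ (1 - A ^ 2) * r * (1 - r)⁻¹ := by
    have hsummtail : Summable (fun k : ℕ => ‖a (k + 1)‖ * r ^ (k + 1)) :=
      (summable_nat_add_iff 1).mpr hsum
    have hgeo : Summable (fun k : ℕ => (1 - A ^ 2) * r * r ^ k) :=
      (summable_geometric_of_lt_one hr0 hr1).mul_left _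
    calc ∑' k : ℕ, ‖a (k + 1)‖ * r ^ (k + 1)
        ≤ ∑' k : ℕ, (1 - A ^ 2) * r * r ^ k := by
          apply Summable.tsum_le_tsum _ hsummtail hgeo
          intro k
          rw [pow_succ]
          have h1 : ‖a (k + 1)‖ * (r ^ k * r) ≤ (1 - A ^ 2) * (r ^ k * r) := by
            apply mul_le_mul_of_nonneg_right (hwiener (k + 1) (by omega)) (by positivity)
          calc ‖a (k + 1)‖ * (r ^ k * r) ≤ (1 - A ^ 2) * (r ^ k * r) := h1
            _ = (1 - A ^ 2) * r * r ^ k := by ring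
      _ = (1 - A ^ 2) * r * (1 - r)⁻¹ := by
          rw [tsum_mul_left, tsum_geometric_of_lt_one hr0 hr1]
  have hfirst : ‖a 0‖ * r ^ 0 = A := by simp [hA]
  rw [hfirst]
  have hrineq : (1 - A ^ 2) * r * (1 - r)⁻¹ ≤ 1 - A := by
    have h1r : 0 < 1 - r := by linarith
    rw [mul_inv_le_iff₀ h1r]
    have hkey : (0:ℝ) ≤ (1 - A) * (1 - 2*r - r*A) :=
      mul_nonneg (by linarith) (by nlinarith [mul_le_mul_of_nonneg_left hA1 hr0])
    nlinarith [hkey]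
  linarith [htail, hrineq]
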